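/- Let n be a positive integer, σ > 0, X = {x ∈ ℝⁿ : Σᵢ|xᵢ| ≤ 1} the unit ℓ₁ ball, and let ξ ∼ N(0, σ²I_n) be a standard Gaussian vector scaled by σ. Let x̂ : ℝⁿ → X be any measurable map satisfying ‖x̂(ω) − ω‖_∞ = min_{y∈X} ‖y − ω‖_∞ for every ω ∈ ℝⁿ. Then for every x ∈ X and every ρ > 0: E[ ‖x̂(x + ξ) − x‖₂² ] ≤ 4ρσ + 8n·exp(−ρ²/2). -/

import Mathlib

open MeasureTheory ProbabilityTheory
open scoped NNReal ENNReal

lemma gauss_tail (v : ℝ≥0) (hv : v ≠ 0) (t a : ℝ) :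
    gaussianReal 0 v {x | a ≤ t * x} ≤ ENNReal.ofReal (Real.exp (t^2*v/2 - a)) := by
  have hS : MeasurableSet {x : ℝ | a ≤ t * x} :=
    measurableSet_le measurable_const (measurable_const.mul measurable_id)
  rw [gaussianReal_of_var_ne_zero _ hv, withDensity_apply _ hS]
  have hposv : (0:ℝ) < (v:ℝ) := by positivity
  calc ∫⁻ x in {x | a ≤ t * x}, gaussianPDF 0 v x
      ≤ ∫⁻ x, ENNReal.ofReal (Real.exp (t*x - a) * gaussianPDFReal 0 v x) := by
        refine le_trans (setLIntegral_mono ?_ ?_) (setLIntegral_le_lintegral _ _)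
        · exact ((measurable_id.const_mul t |>.sub_const a).exp.mul
            (measurable_gaussianPDFReal 0 v)).ennreal_ofReal
        · intro x hx
          simp only [Set.mem_setOf_eq] at hx
          rw [gaussianPDF]
          refine ENNReal.ofReal_le_ofReal ?_
          nth_rewrite 1 [← one_mul (gaussianPDFReal 0 v x)]
          exact mul_le_mul_of_nonneg_right
            (by rw [← Real.exp_zero]; exact Real.exp_le_exp.2 (by linarith))
            (gaussianPDFReal_nonneg 0 v x)
    _ = ENNReal.ofReal (Real.exp (t^2*v/2 - a)) := by
        have key : ∀ x : ℝ, Real.exp (t*x - a) * gaussianPDFReal 0 v x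
            = Real.exp (t^2*v/2 - a) * gaussianPDFReal (t*v) v x := by
          intro x
          simp only [gaussianPDFReal]
          rw [mul_left_comm, mul_left_comm (Real.exp (t^2*v/2 - a)), ← Real.exp_add,
            ← Real.exp_add]
          congr 2
          field_simp
          ring
        simp_rw [key, ENNReal.ofReal_mul (Real.exp_nonneg _)]
        have hpdf : ∀ x, ENNReal.ofReal (gaussianPDFReal (t*v) v x) = gaussianPDF (t*v) v x :=
          fun _ => rfl
        simp_rw [hpdf]
        rw [lintegral_const_mul _ (measurable_gaussianPDF _ _), lintegral_gaussianPDF_eq_one _ hv,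
          mul_one]

/-- motivating example: for the unit `ℓ₁` ball `X`, Gaussian
noise `ξ ∼ N(0, σ²I_n)` (modelled by a product of one-dimensional Gaussians),
and any measurable selection `x̂(ω)` of a minimizer of `y ↦ ‖y − ω‖_∞` over `X`
(the Pi norm on `Fin n → ℝ` is the sup norm), one has, for every `x ∈ X` and
`ρ > 0`, `E[‖x̂(x+ξ) − x‖₂²] ≤ 4ρσ + 8n exp(−ρ²/2)`. -/
theorem stmt19
    {n : ℕ} (hn : 0 < n) (σ : ℝ) (hσ : 0 < σ)
    (X : Set (Fin n → ℝ)) (hX : X = {x | ∑ i, |x i| ≤ 1})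
    (P : Measure (Fin n → ℝ))
    (hP : P = Measure.pi fun _ => gaussianReal 0 (σ ^ 2).toNNReal)
    (xhat : (Fin n → ℝ) → (Fin n → ℝ)) (hmeas : Measurable xhat)
    (hmem : ∀ ω, xhat ω ∈ X)
    (hmin : ∀ ω, ∀ y ∈ X, ‖xhat ω - ω‖ ≤ ‖y - ω‖) :
    ∀ x ∈ X, ∀ ρ : ℝ, 0 < ρ →
      ∫ ξ, (∑ i, (xhat (x + ξ) i - x i) ^ 2) ∂P
        ≤ 4 * ρ * σ + 8 * n * Real.exp (-ρ ^ 2 / 2) := by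
  subst hX hP
  intro x hx ρ hρ
  set v : ℝ≥0 := (σ ^ 2).toNNReal with hvdef
  have hv : v ≠ 0 := by
    simp only [hvdef, ne_eq, Real.toNNReal_eq_zero, not_le]
    positivity
  have hvr : ((v : ℝ≥0) : ℝ) = σ ^ 2 := Real.coe_toNNReal _ (by positivity)
  set P : Measure (Fin n → ℝ) := Measure.pi fun _ => gaussianReal 0 v with hPdef
  haveI : IsProbabilityMeasure P := by rw [hPdef]; infer_instance
  set f : (Fin n → ℝ) → ℝ := fun ξ => ∑ i, (xhat (x + ξ) i - x i) ^ 2 with hfdef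
  set A : Set (Fin n → ℝ) := {ξ | ρ * σ < ‖ξ‖} with hAdef
  have hAmeas : MeasurableSet A := measurableSet_lt measurable_const measurable_norm
  have hρσ : 0 < ρ * σ := mul_pos hρ hσ
  -- pointwise bounds
  have hD1 : ∀ ξ : Fin n → ℝ, ∑ i, |xhat (x + ξ) i - x i| ≤ 2 := by
    intro ξ
    calc ∑ i, |xhat (x + ξ) i - x i| ≤ ∑ i, (|xhat (x + ξ) i| + |x i|) :=
          Finset.sum_le_sum fun i _ => abs_sub _ _
      _ = (∑ i, |xhat (x + ξ) i|) + ∑ i, |x i| := Finset.sum_add_distrib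
      _ ≤ 1 + 1 := add_le_add (hmem (x + ξ)) hx
      _ = 2 := by norm_num
  have hDinf : ∀ ξ : Fin n → ℝ, ∀ i, |xhat (x + ξ) i - x i| ≤ ‖xhat (x + ξ) - x‖ := by
    intro ξ i
    have := norm_le_pi_norm (xhat (x + ξ) - x) i
    simpa [Real.norm_eq_abs] using this
  have hfD : ∀ ξ : Fin n → ℝ, f ξ ≤ ‖xhat (x + ξ) - x‖ * 2 := by
    intro ξ
    calc f ξ = ∑ i, |xhat (x + ξ) i - x i| * |xhat (x + ξ) i - x i| := by
          simp [hfdef, ← abs_mul_abs_self, sq]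
      _ ≤ ∑ i, ‖xhat (x + ξ) - x‖ * |xhat (x + ξ) i - x i| :=
          Finset.sum_le_sum fun i _ => mul_le_mul_of_nonneg_right (hDinf ξ i) (abs_nonneg _)
      _ = ‖xhat (x + ξ) - x‖ * ∑ i, |xhat (x + ξ) i - x i| := by rw [Finset.mul_sum]
      _ ≤ ‖xhat (x + ξ) - x‖ * 2 :=
          mul_le_mul_of_nonneg_left (hD1 ξ) (norm_nonneg _)
  have hD2 : ∀ ξ : Fin n → ℝ, ‖xhat (x + ξ) - x‖ ≤ 2 := by
    intro ξ
    refine (pi_norm_le_iff_of_nonneg (by norm_num)).2 fun i => ?_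
    rw [Real.norm_eq_abs]
    calc |(xhat (x + ξ) - x) i| = |xhat (x + ξ) i - x i| := rfl
      _ ≤ ∑ j, |xhat (x + ξ) j - x j| :=
          Finset.single_le_sum (f := fun j => |xhat (x + ξ) j - x j|)
            (fun j _ => abs_nonneg _) (Finset.mem_univ i)
      _ ≤ 2 := hD1 ξ
  have hDξ : ∀ ξ : Fin n → ℝ, ‖xhat (x + ξ) - x‖ ≤ 2 * ‖ξ‖ := by
    intro ξ
    have h1 : xhat (x + ξ) - x = (xhat (x + ξ) - (x + ξ)) + ξ := by abel
    have h2 : ‖xhat (x + ξ) - (x + ξ)‖ ≤ ‖ξ‖ := by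
      have := hmin (x + ξ) x hx
      have h3 : x - (x + ξ) = -ξ := by abel
      rwa [h3, norm_neg] at this
    calc ‖xhat (x + ξ) - x‖ ≤ ‖xhat (x + ξ) - (x + ξ)‖ + ‖ξ‖ := by
          rw [h1]; exact norm_add_le _ _
      _ ≤ ‖ξ‖ + ‖ξ‖ := add_le_add_left h2 _
      _ = 2 * ‖ξ‖ := by ring
  have hf4 : ∀ ξ, f ξ ≤ 4 := fun ξ =>
    (hfD ξ).trans (by nlinarith [hD2 ξ])
  have hfnonneg : ∀ ξ, 0 ≤ f ξ := fun ξ =>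
    Finset.sum_nonneg fun i _ => sq_nonneg _
  -- measurability, integrability
  have hmeasf : Measurable f := by
    refine Finset.measurable_sum _ fun i _ => ?_
    exact (((measurable_pi_apply i).comp (hmeas.comp (measurable_id.const_add x))).sub
      measurable_const).pow_const 2
  have hintf : Integrable f P := by
    refine Integrable.mono' (integrable_const (4:ℝ)) hmeasf.aestronglyMeasurable
      (ae_of_all _ fun ξ => ?_)
    rw [Real.norm_eq_abs, abs_of_nonneg (hfnonneg ξ)]
    exact hf4 ξ
  set g : (Fin n → ℝ) → ℝ := fun ξ => 4 * (ρ * σ) + A.indicator (fun _ => (4:ℝ)) ξ with hgdef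
  have hintg : Integrable g P :=
    (integrable_const _).add ((integrable_const (4:ℝ)).indicator hAmeas)
  have hfg : ∀ ξ, f ξ ≤ g ξ := by
    intro ξ
    by_cases hξ : ξ ∈ A
    · simp only [hgdef, Set.indicator_of_mem hξ]
      linarith [hf4 ξ]
    · simp only [hgdef, Set.indicator_of_notMem hξ, add_zero]
      have hξ' : ‖ξ‖ ≤ ρ * σ := by
        simp only [hAdef, Set.mem_setOf_eq, not_lt] at hξ; exact hξ
      calc f ξ ≤ ‖xhat (x + ξ) - x‖ * 2 := hfD ξ
        _ ≤ (2 * ‖ξ‖) * 2 := mul_le_mul_of_nonneg_right (hDξ ξ) (by norm_num)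
        _ ≤ 4 * (ρ * σ) := by nlinarith [norm_nonneg ξ]
  -- tail bound per coordinate
  have htail : gaussianReal 0 v {y : ℝ | ρ * σ < |y|} ≤
      ENNReal.ofReal (2 * Real.exp (-ρ ^ 2 / 2)) := by
    have hsub : {y : ℝ | ρ * σ < |y|} ⊆
        {y : ℝ | ρ ^ 2 ≤ (ρ / σ) * y} ∪ {y : ℝ | ρ ^ 2 ≤ (-(ρ / σ)) * y} := by
      intro y hy
      simp only [Set.mem_setOf_eq] at hy
      rcases abs_cases y with ⟨h, _⟩ | ⟨h, _⟩
      · left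
        simp only [Set.mem_setOf_eq]
        rw [div_mul_eq_mul_div, le_div_iff₀ hσ]
        nlinarith
      · right
        simp only [Set.mem_setOf_eq, neg_mul]
        rw [← mul_neg, div_mul_eq_mul_div, le_div_iff₀ hσ]
        nlinarith
    have hexp : ∀ t : ℝ, t = ρ / σ ∨ t = -(ρ / σ) →
        ENNReal.ofReal (Real.exp (t ^ 2 * v / 2 - ρ ^ 2))
          = ENNReal.ofReal (Real.exp (-ρ ^ 2 / 2)) := by
      intro t ht
      congr 1
      congr 1
      have ht2 : t ^ 2 = ρ ^ 2 / σ ^ 2 := by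
        rcases ht with h | h <;> rw [h] <;> field_simp
      rw [ht2, hvr]
      field_simp
      ring
    calc gaussianReal 0 v {y : ℝ | ρ * σ < |y|}
        ≤ gaussianReal 0 v ({y : ℝ | ρ ^ 2 ≤ (ρ / σ) * y} ∪ {y : ℝ | ρ ^ 2 ≤ (-(ρ / σ)) * y}) :=
          measure_mono hsub
      _ ≤ gaussianReal 0 v {y : ℝ | ρ ^ 2 ≤ (ρ / σ) * y}
          + gaussianReal 0 v {y : ℝ | ρ ^ 2 ≤ (-(ρ / σ)) * y} := measure_union_le _ _
      _ ≤ ENNReal.ofReal (Real.exp ((ρ / σ) ^ 2 * v / 2 - ρ ^ 2))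
          + ENNReal.ofReal (Real.exp ((-(ρ / σ)) ^ 2 * v / 2 - ρ ^ 2)) :=
          add_le_add (gauss_tail v hv _ _) (gauss_tail v hv _ _)
      _ = ENNReal.ofReal (Real.exp (-ρ ^ 2 / 2)) + ENNReal.ofReal (Real.exp (-ρ ^ 2 / 2)) := by
          rw [hexp _ (Or.inl rfl), hexp _ (Or.inr rfl)]
      _ = ENNReal.ofReal (2 * Real.exp (-ρ ^ 2 / 2)) := by
          rw [← ENNReal.ofReal_add (Real.exp_nonneg _) (Real.exp_nonneg _)]
          congr 1; ring
  -- marginal computation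
  have hmarg : ∀ i : Fin n, P (Function.eval i ⁻¹' {y : ℝ | ρ * σ < |y|})
      = gaussianReal 0 v {y : ℝ | ρ * σ < |y|} := by
    intro i
    rw [hPdef, Set.eval_preimage, Measure.pi_pi]
    have happ : ∀ j : Fin n, gaussianReal 0 v
        (Function.update (fun _ : Fin n => (Set.univ : Set ℝ)) i {y : ℝ | ρ * σ < |y|} j)
        = Function.update (fun _ : Fin n => gaussianReal 0 v (Set.univ : Set ℝ)) i
          (gaussianReal 0 v {y : ℝ | ρ * σ < |y|}) j :=
      fun j => Function.apply_update (fun (_ : Fin n) (s : Set ℝ) => gaussianReal 0 v s) _ i _ j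
    simp_rw [happ]
    rw [Finset.prod_update_of_mem (Finset.mem_univ i)]
    simp [measure_univ]
  -- union bound
  have hA : P A ≤ ENNReal.ofReal (2 * n * Real.exp (-ρ ^ 2 / 2)) := by
    have hsub : A ⊆ ⋃ i : Fin n, Function.eval i ⁻¹' {y : ℝ | ρ * σ < |y|} := by
      intro ξ hξ
      simp only [hAdef, Set.mem_setOf_eq] at hξ
      by_contra hc
      simp only [Set.mem_iUnion, Set.mem_preimage, Set.mem_setOf_eq, not_exists, not_lt] at hc
      have : ‖ξ‖ ≤ ρ * σ := (pi_norm_le_iff_of_nonneg hρσ.le).2 fun i => by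
        rw [Real.norm_eq_abs]; exact hc i
      linarith
    calc P A ≤ P (⋃ i : Fin n, Function.eval i ⁻¹' {y : ℝ | ρ * σ < |y|}) := measure_mono hsub
      _ ≤ ∑' i : Fin n, P (Function.eval i ⁻¹' {y : ℝ | ρ * σ < |y|}) := measure_iUnion_le _
      _ = ∑ i : Fin n, P (Function.eval i ⁻¹' {y : ℝ | ρ * σ < |y|}) := tsum_fintype _
      _ ≤ ∑ _i : Fin n, ENNReal.ofReal (2 * Real.exp (-ρ ^ 2 / 2)) :=
          Finset.sum_le_sum fun i _ => (hmarg i ▸ htail)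
      _ = n * ENNReal.ofReal (2 * Real.exp (-ρ ^ 2 / 2)) := by
          rw [Finset.sum_const, Finset.card_univ, Fintype.card_fin, nsmul_eq_mul]
      _ = ENNReal.ofReal (2 * n * Real.exp (-ρ ^ 2 / 2)) := by
          rw [← ENNReal.ofReal_natCast n, ← ENNReal.ofReal_mul (Nat.cast_nonneg n)]
          congr 1; ring
  have hAtoReal : (P A).toReal ≤ 2 * n * Real.exp (-ρ ^ 2 / 2) :=
    ENNReal.toReal_le_of_le_ofReal (by positivity) hA
  -- conclude
  calc ∫ ξ, f ξ ∂P ≤ ∫ ξ, g ξ ∂P := integral_mono hintf hintg hfg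
    _ = 4 * (ρ * σ) + 4 * (P A).toReal := by
        rw [hgdef, integral_add (integrable_const _)
          ((integrable_const (4:ℝ)).indicator hAmeas), integral_const,
          integral_indicator_const _ hAmeas]
        simp [measure_univ, mul_comm, measureReal_def]
    _ ≤ 4 * ρ * σ + 8 * n * Real.exp (-ρ ^ 2 / 2) := by nlinarith [hAtoReal]
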